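/- Let 0 < L̂ ≤ Û < 1 with L̂ ≥ (1 − L̂)·Û, and let p : 𝔸 × {1, 2, …} → ℝ satisfy L̂ ≤ p^j(a) ≤ Û for all a ∈ 𝔸 and all stages j. Then the task-assignment objective f((a_1, …, a_k)) = 1 − ∏_{j=1}^k (1 − p^j(a_j)) is K-diminishing for every integer K ≥ 1. -/

import Mathlib

/-- Task-assignment objective: if `0 < L̂ ≤ Û < 1`, `L̂ ≥ (1 − L̂)·Û`, and the
success probabilities satisfy `L̂ ≤ p a j ≤ Û` for all actions `a` and stages
`j ≥ 1`, then `f((a_1,…,a_k)) = 1 − ∏_{j=1}^k (1 − p^j(a_j))` is K-diminishing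
for every `K ≥ 1`.  The element at (0-based) list index `i` is at stage `i+1`. -/
theorem stmt15 {α : Type*} [Nonempty α] (Lhat Uhat : ℝ)
    (hL : 0 < Lhat) (hLU : Lhat ≤ Uhat) (hU : Uhat < 1)
    (hcond : Lhat ≥ (1 - Lhat) * Uhat)
    (p : α → ℕ → ℝ)
    (hp : ∀ (a : α) (j : ℕ), 1 ≤ j → Lhat ≤ p a j ∧ p a j ≤ Uhat)
    (f : List α → ℝ)
    (hf : ∀ M : List α, f M = 1 - (M.zipIdx.map (fun ja => 1 - p ja.1 (ja.2 + 1))).prod) :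
    ∀ K : ℕ, 1 ≤ K →
      ∀ M N : List α, M <+: N → N.length ≤ K - 1 → ∀ a : α,
        f (M ++ [a]) - f M ≥ f (N ++ [a]) - f N := by
  have hL1 : 0 ≤ 1 - Lhat := by linarith
  have hL1' : 1 - Lhat ≤ 1 := by linarith
  -- bounds on enumFrom products
  have hprod : ∀ (l : List α) (s : ℕ),
      0 ≤ ((l.zipIdx s).map (fun ja => 1 - p ja.1 (ja.2 + 1))).prod ∧
      ((l.zipIdx s).map (fun ja => 1 - p ja.1 (ja.2 + 1))).prod ≤ (1 - Lhat) ^ l.length := by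
    intro l
    induction l with
    | nil => intro s; simp
    | cons b t ih =>
      intro s
      obtain ⟨h0, h1⟩ := ih (s + 1)
      have hb := hp b (s + 1) (Nat.le_add_left 1 s)
      have hb0 : 0 ≤ 1 - p b (s + 1) := by linarith [hb.2]
      have hb1 : 1 - p b (s + 1) ≤ 1 - Lhat := by linarith [hb.1]
      constructor
      · simpa using mul_nonneg hb0 h0
      · simp only [List.zipIdx_cons, List.map_cons, List.prod_cons, List.length_cons, pow_succ']
        exact mul_le_mul hb1 h1 h0 hL1
  have key : ∀ (M : List α) (a : α),
      f (M ++ [a]) - f M =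
        ((M.zipIdx.map (fun ja => 1 - p ja.1 (ja.2 + 1))).prod) * p a (M.length + 1) := by
    intro M a
    rw [hf, hf, List.zipIdx_append]
    simp [List.zipIdx]
    ring
  intro K hK M N hMN hNK a
  obtain ⟨T, rfl⟩ := hMN
  rw [ge_iff_le, key, key]
  set gM := (M.zipIdx.map (fun ja => 1 - p ja.1 (ja.2 + 1))).prod with hgM
  set gT := ((T.zipIdx M.length).map (fun ja => 1 - p ja.1 (ja.2 + 1))).prod with hgT
  have hsplit : ((M ++ T).zipIdx.map (fun ja => 1 - p ja.1 (ja.2 + 1))).prod = gM * gT := by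
    rw [List.zipIdx_append, Nat.zero_add, List.map_append, List.prod_append]
  rw [hsplit]
  have hgM0 : 0 ≤ gM := by
    have := (hprod M 0).1
    exact this
  obtain ⟨hgT0, hgT1⟩ := hprod T M.length
  rcases T with _ | ⟨b, T'⟩
  · simp [hgT]
  · have hqN := hp a ((M ++ b :: T').length + 1) (Nat.le_add_left 1 _)
    have hqM := hp a (M.length + 1) (Nat.le_add_left 1 _)
    have hlen : 1 ≤ (b :: T').length := by simp
    have hpow : (1 - Lhat) ^ (b :: T').length ≤ 1 - Lhat := by
      calc (1 - Lhat) ^ (b :: T').length ≤ (1 - Lhat) ^ 1 :=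
        pow_le_pow_of_le_one hL1 hL1' hlen
      _ = 1 - Lhat := pow_one _
    have hU0 : 0 ≤ Uhat := le_of_lt (lt_of_lt_of_le hL hLU)
    have h1 : gT * p a ((M ++ b :: T').length + 1) ≤ (1 - Lhat) * Uhat := by
      calc gT * p a ((M ++ b :: T').length + 1) ≤ gT * Uhat :=
            mul_le_mul_of_nonneg_left hqN.2 hgT0
        _ ≤ (1 - Lhat) ^ (b :: T').length * Uhat := mul_le_mul_of_nonneg_right hgT1 hU0
        _ ≤ (1 - Lhat) * Uhat := mul_le_mul_of_nonneg_right hpow hU0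
    have h2 : gT * p a ((M ++ b :: T').length + 1) ≤ p a (M.length + 1) := by
      linarith [hqM.1]
    calc gM * gT * p a ((M ++ b :: T').length + 1)
        = gM * (gT * p a ((M ++ b :: T').length + 1)) := by ring
      _ ≤ gM * p a (M.length + 1) := mul_le_mul_of_nonneg_left h2 hgM0
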